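/- For every m < 1, the complete elliptic integral of the first kind satisfies the interpolation inequality K(m) · K''(m) ≥ 3 (K'(m))². -/

import Mathlib

/-- The complete elliptic integral of the first kind,
`K(m) = ∫₀¹ dζ / √((1-ζ²)(1-mζ²))`, defined for `m < 1`. -/
noncomputable def ellipticK (m : ℝ) : ℝ :=
  ∫ ζ in (0:ℝ)..1, 1 / Real.sqrt ((1 - ζ ^ 2) * (1 - m * ζ ^ 2))

open MeasureTheory Set Filter Metric

namespace EllipticKAux

/-- The basic family of integrands: `ζ^q (1-ζ²)^{-1/2} (1-mζ²)^{-p}`. -/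
noncomputable def Fp (p : ℝ) (q : ℕ) (m ζ : ℝ) : ℝ :=
  ζ ^ q * (1 - ζ ^ 2) ^ (-(1/2) : ℝ) * (1 - m * ζ ^ 2) ^ (-p)

/-- The corresponding integrals over `(0,1]`. -/
noncomputable def IK (p : ℝ) (q : ℕ) (m : ℝ) : ℝ :=
  ∫ ζ in Ioc (0:ℝ) 1, Fp p q m ζ

lemma base_integrable :
    IntegrableOn (fun ζ : ℝ => (1 - ζ ^ 2) ^ (-(1/2) : ℝ)) (Ioc (0:ℝ) 1) := by
  have h1 : IntervalIntegrable (fun x : ℝ => x ^ (-(1/2) : ℝ)) volume 0 1 :=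
    intervalIntegral.intervalIntegrable_rpow' (by norm_num)
  have h2 : IntervalIntegrable (fun x : ℝ => (1 - x) ^ (-(1/2) : ℝ)) volume 0 1 := by
    have := h1.comp_sub_left 1
    simpa using this.symm
  have h3 : IntegrableOn (fun x : ℝ => (1 - x) ^ (-(1/2) : ℝ)) (Ioc (0:ℝ) 1) := by
    rw [intervalIntegrable_iff_integrableOn_Ioc_of_le (by norm_num : (0:ℝ) ≤ 1)] at h2
    exact h2
  refine h3.mono' ?_ ?_
  · apply Measurable.aestronglyMeasurable
    fun_prop
  · filter_upwards [ae_restrict_mem measurableSet_Ioc] with ζ hζ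
    have hζ2 : ζ ^ 2 ≤ 1 := by nlinarith [hζ.1, hζ.2]
    have ha : (0:ℝ) ≤ 1 - ζ ^ 2 := by linarith
    rw [Real.norm_eq_abs, abs_of_nonneg (Real.rpow_nonneg ha _)]
    rcases eq_or_lt_of_le hζ.2 with h | h
    · subst h
      norm_num
    · have hb : (0:ℝ) < 1 - ζ := by linarith
      exact Real.rpow_le_rpow_of_nonpos hb (by nlinarith [hζ.1]) (by norm_num)

lemma one_sub_mul_sq_le {x ζ b : ℝ} (hζ : ζ ∈ Ioc (0:ℝ) 1) (hx : x ≤ b) :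
    1 - max b 0 ≤ 1 - x * ζ ^ 2 := by
  have hζ2 : ζ ^ 2 ≤ 1 := by nlinarith [hζ.1, hζ.2]
  have hζ0 : 0 ≤ ζ ^ 2 := sq_nonneg ζ
  rcases le_total x 0 with h | h
  · have : x * ζ ^ 2 ≤ 0 := mul_nonpos_of_nonpos_of_nonneg h hζ0
    have := le_max_right b 0
    linarith
  · have h1 : x * ζ ^ 2 ≤ x := by nlinarith
    have := le_max_left b 0
    linarith

lemma Fp_nonneg {p : ℝ} {q : ℕ} {m ζ : ℝ} (hζ : ζ ∈ Ioc (0:ℝ) 1) (hm : m < 1) :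
    0 ≤ Fp p q m ζ := by
  have hζ2 : ζ ^ 2 ≤ 1 := by nlinarith [hζ.1, hζ.2]
  have ha : (0:ℝ) ≤ 1 - ζ ^ 2 := by linarith
  have hb : (0:ℝ) ≤ 1 - m * ζ ^ 2 := by
    have := one_sub_mul_sq_le hζ (le_refl m)
    have : 1 - max m 0 ≤ 1 - m * ζ ^ 2 := this
    have hmax : max m 0 ≤ 1 := max_le hm.le zero_le_one
    nlinarith [one_sub_mul_sq_le hζ (le_refl m)]
  exact mul_nonneg (mul_nonneg (pow_nonneg hζ.1.le _) (Real.rpow_nonneg ha _))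
    (Real.rpow_nonneg hb _)

lemma Fp_bound {p : ℝ} (hp : 0 ≤ p) {q : ℕ} {c : ℝ} (hc : 0 < c) {m ζ : ℝ}
    (hζ : ζ ∈ Ioc (0:ℝ) 1) (hb : c ≤ 1 - m * ζ ^ 2) :
    Fp p q m ζ ≤ c ^ (-p) * (1 - ζ ^ 2) ^ (-(1/2) : ℝ) := by
  have hζ2 : ζ ^ 2 ≤ 1 := by nlinarith [hζ.1, hζ.2]
  have ha : (0:ℝ) ≤ 1 - ζ ^ 2 := by linarith
  have e1 : (0:ℝ) ≤ (1 - ζ ^ 2) ^ (-(1/2) : ℝ) := Real.rpow_nonneg ha _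
  have hq : ζ ^ q ≤ 1 := pow_le_one₀ hζ.1.le hζ.2
  have e2 : (1 - m * ζ ^ 2) ^ (-p) ≤ c ^ (-p) :=
    Real.rpow_le_rpow_of_nonpos hc hb (by linarith)
  calc ζ ^ q * (1 - ζ ^ 2) ^ (-(1/2) : ℝ) * (1 - m * ζ ^ 2) ^ (-p)
      ≤ 1 * (1 - ζ ^ 2) ^ (-(1/2) : ℝ) * c ^ (-p) := by
        apply mul_le_mul (mul_le_mul hq le_rfl e1 zero_le_one) e2
          (Real.rpow_nonneg (by nlinarith) _) (by positivity)
    _ = c ^ (-p) * (1 - ζ ^ 2) ^ (-(1/2) : ℝ) := by ring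

lemma Fp_measurable (p : ℝ) (q : ℕ) (m : ℝ) : Measurable (Fp p q m) := by
  unfold Fp; fun_prop

lemma Fp_integrable {p : ℝ} (hp : 0 ≤ p) (q : ℕ) {m : ℝ} (hm : m < 1) :
    IntegrableOn (Fp p q m) (Ioc (0:ℝ) 1) := by
  set c : ℝ := 1 - max m 0 with hc_def
  have hc : 0 < c := by
    have : max m 0 < 1 := max_lt hm one_pos
    simp only [hc_def]; linarith
  refine (base_integrable.const_mul (c ^ (-p))).mono' ?_ ?_
  · exact (Fp_measurable p q m).aestronglyMeasurable
  · filter_upwards [ae_restrict_mem measurableSet_Ioc] with ζ hζ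
    rw [Real.norm_eq_abs, abs_of_nonneg (Fp_nonneg hζ hm)]
    exact Fp_bound hp hc hζ (one_sub_mul_sq_le hζ le_rfl)

lemma hasDerivAt_IK {p : ℝ} (hp : 0 ≤ p) (q : ℕ) {m : ℝ} (hm : m < 1) :
    HasDerivAt (IK p q) (p * IK (p+1) (q+2) m) m := by
  set ε : ℝ := (1 - m) / 2 with hε_def
  have hε : 0 < ε := by simp only [hε_def]; linarith
  set b : ℝ := (m + 1) / 2 with hb_def
  set c : ℝ := 1 - max b 0 with hc_def
  have hb1 : b < 1 := by simp only [hb_def]; linarith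
  have hc : 0 < c := by
    have : max b 0 < 1 := max_lt hb1 one_pos
    simp only [hc_def]; linarith
  have hball : ∀ x ∈ ball m ε, x ≤ b := by
    intro x hx
    rw [mem_ball, Real.dist_eq] at hx
    have := abs_lt.1 hx
    simp only [hb_def, hε_def] at *
    linarith [this.2]
  have key := hasDerivAt_integral_of_dominated_loc_of_deriv_le
    (μ := volume.restrict (Ioc (0:ℝ) 1))
    (F := fun x ζ => Fp p q x ζ)
    (F' := fun x ζ => p * Fp (p+1) (q+2) x ζ)
    (bound := fun ζ => p * (c ^ (-(p+1)) * (1 - ζ ^ 2) ^ (-(1/2) : ℝ)))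
    (ball_mem_nhds m hε)
    (Eventually.of_forall fun x => (Fp_measurable p q x).aestronglyMeasurable)
    (Fp_integrable hp q hm)
    (((Fp_measurable (p+1) (q+2) m).const_mul p).aestronglyMeasurable)
    ?_ ?_ ?_
  · have h := key.2
    rw [show (∫ a in Ioc (0:ℝ) 1, p * Fp (p+1) (q+2) m a) = p * IK (p+1) (q+2) m by
      rw [IK]; exact integral_const_mul p _] at h
    exact h
  · -- bound
    filter_upwards [ae_restrict_mem measurableSet_Ioc] with ζ hζ
    intro x hx
    have hxb : x ≤ b := hball x hx
    have hx1 : x < 1 := lt_of_le_of_lt hxb hb1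
    rw [Real.norm_eq_abs, abs_of_nonneg (mul_nonneg hp (Fp_nonneg hζ hx1))]
    exact mul_le_mul_of_nonneg_left
      (Fp_bound (by linarith) hc hζ (one_sub_mul_sq_le hζ hxb)) hp
  · -- bound integrable
    exact ((base_integrable.const_mul (c ^ (-(p+1)))).const_mul p)
  · -- differentiability
    filter_upwards [ae_restrict_mem measurableSet_Ioc] with ζ hζ
    intro x hx
    have hxb : x ≤ b := hball x hx
    have hpos : 0 < 1 - x * ζ ^ 2 := lt_of_lt_of_le hc (one_sub_mul_sq_le hζ hxb)
    have h1 : HasDerivAt (fun y : ℝ => 1 - y * ζ ^ 2) (-ζ ^ 2) x := by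
      simpa using (hasDerivAt_mul_const (ζ ^ 2)).const_sub 1
    have h2 : HasDerivAt (fun y : ℝ => (1 - y * ζ ^ 2) ^ (-p))
        (-ζ ^ 2 * (-p) * (1 - x * ζ ^ 2) ^ (-p - 1)) x :=
      h1.rpow_const (Or.inl hpos.ne')
    have h3 := h2.const_mul (ζ ^ q * (1 - ζ ^ 2) ^ (-(1/2) : ℝ))
    have h4 : HasDerivAt (fun x => Fp p q x ζ)
        (ζ ^ q * (1 - ζ ^ 2) ^ (-(1/2) : ℝ) * (-ζ ^ 2 * (-p) * (1 - x * ζ ^ 2) ^ (-p - 1))) x := h3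
    convert h4 using 1
    · rfl
    · rfl
    simp only [Fp]
    rw [show -p - 1 = -(p+1) by ring, pow_add]
    ring

lemma ellipticK_eq {m : ℝ} (hm : m < 1) : ellipticK m = IK (1/2) 0 m := by
  rw [ellipticK, IK, intervalIntegral.integral_of_le (by norm_num : (0:ℝ) ≤ 1)]
  apply setIntegral_congr_fun measurableSet_Ioc
  intro ζ hζ
  have hζ2 : ζ ^ 2 ≤ 1 := by nlinarith [hζ.1, hζ.2]
  have ha : (0:ℝ) ≤ 1 - ζ ^ 2 := by linarith
  have hb : (0:ℝ) ≤ 1 - m * ζ ^ 2 := by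
    have := one_sub_mul_sq_le hζ (le_refl m)
    have hmax : max m 0 < 1 := max_lt hm one_pos
    linarith
  simp only [Fp, pow_zero, one_mul]
  rw [Real.sqrt_mul ha, Real.rpow_neg ha, Real.rpow_neg hb, ← Real.sqrt_eq_rpow,
    ← Real.sqrt_eq_rpow, one_div, mul_inv]

lemma cauchy_schwarz {m : ℝ} (hm : m < 1) :
    IK (3/2) 2 m ^ 2 ≤ IK (1/2) 0 m * IK (5/2) 4 m := by
  set μ := volume.restrict (Ioc (0:ℝ) 1) with hμ
  set f : ℝ → ℝ := fun ζ => (1 - ζ ^ 2) ^ (-(1/4) : ℝ) * (1 - m * ζ ^ 2) ^ (-(1/4) : ℝ)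
  set g : ℝ → ℝ := fun ζ => ζ ^ 2 * (1 - ζ ^ 2) ^ (-(1/4) : ℝ) * (1 - m * ζ ^ 2) ^ (-(5/4) : ℝ)
  have hIoo : ∀ᵐ ζ ∂μ, ζ ∈ Ioo (0:ℝ) 1 := by
    rw [hμ, ← Measure.restrict_congr_set Ioo_ae_eq_Ioc]
    exact ae_restrict_mem measurableSet_Ioo
  have hident : ∀ᵐ ζ ∂μ, f ζ * f ζ = Fp (1/2) 0 m ζ ∧ f ζ * g ζ = Fp (3/2) 2 m ζ ∧
      g ζ * g ζ = Fp (5/2) 4 m ζ := by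
    filter_upwards [hIoo] with ζ hζ
    have ha : (0:ℝ) < 1 - ζ ^ 2 := by nlinarith [hζ.1, hζ.2]
    have hb : (0:ℝ) < 1 - m * ζ ^ 2 := by
      have := one_sub_mul_sq_le (Ioo_subset_Ioc_self hζ) (le_refl m)
      have hmax : max m 0 < 1 := max_lt hm one_pos
      linarith
    have ea : ∀ r s : ℝ, (1 - ζ ^ 2) ^ r * (1 - ζ ^ 2) ^ s = (1 - ζ ^ 2) ^ (r + s) :=
      fun r s => (Real.rpow_add ha r s).symm
    have eb : ∀ r s : ℝ, (1 - m * ζ ^ 2) ^ r * (1 - m * ζ ^ 2) ^ s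
        = (1 - m * ζ ^ 2) ^ (r + s) := fun r s => (Real.rpow_add hb r s).symm
    refine ⟨?_, ?_, ?_⟩
    · calc f ζ * f ζ = ((1 - ζ^2) ^ (-(1/4):ℝ) * (1 - ζ^2) ^ (-(1/4):ℝ)) *
            ((1 - m*ζ^2) ^ (-(1/4):ℝ) * (1 - m*ζ^2) ^ (-(1/4):ℝ)) := by simp only [f]; ring
        _ = Fp (1/2) 0 m ζ := by rw [ea, eb]; simp only [Fp]; norm_num
    · calc f ζ * g ζ = ζ^2 * ((1 - ζ^2) ^ (-(1/4):ℝ) * (1 - ζ^2) ^ (-(1/4):ℝ)) *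
            ((1 - m*ζ^2) ^ (-(1/4):ℝ) * (1 - m*ζ^2) ^ (-(5/4):ℝ)) := by simp only [f, g]; ring
        _ = Fp (3/2) 2 m ζ := by rw [ea, eb]; simp only [Fp]; norm_num
    · calc g ζ * g ζ = ζ^4 * ((1 - ζ^2) ^ (-(1/4):ℝ) * (1 - ζ^2) ^ (-(1/4):ℝ)) *
            ((1 - m*ζ^2) ^ (-(5/4):ℝ) * (1 - m*ζ^2) ^ (-(5/4):ℝ)) := by simp only [g]; ring
        _ = Fp (5/2) 4 m ζ := by rw [ea, eb]; simp only [Fp]; norm_num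
  have hff : Integrable (fun ζ => f ζ * f ζ) μ :=
    (Fp_integrable (by norm_num) 0 hm).congr (hident.mono fun ζ h => h.1.symm)
  have hfg : Integrable (fun ζ => f ζ * g ζ) μ :=
    (Fp_integrable (by norm_num) 2 hm).congr (hident.mono fun ζ h => h.2.1.symm)
  have hgg : Integrable (fun ζ => g ζ * g ζ) μ :=
    (Fp_integrable (by norm_num) 4 hm).congr (hident.mono fun ζ h => h.2.2.symm)
  have eA : IK (1/2) 0 m = ∫ ζ, f ζ * f ζ ∂μ := by
    rw [IK]; exact (integral_congr_ae (hident.mono fun ζ h => h.1)).symm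
  have eB : IK (3/2) 2 m = ∫ ζ, f ζ * g ζ ∂μ := by
    rw [IK]; exact (integral_congr_ae (hident.mono fun ζ h => h.2.1)).symm
  have eC : IK (5/2) 4 m = ∫ ζ, g ζ * g ζ ∂μ := by
    rw [IK]; exact (integral_congr_ae (hident.mono fun ζ h => h.2.2)).symm
  rw [eA, eB, eC]
  set A := ∫ ζ, f ζ * f ζ ∂μ
  set B := ∫ ζ, f ζ * g ζ ∂μ
  set C := ∫ ζ, g ζ * g ζ ∂μ
  have hquad : ∀ t : ℝ, 0 ≤ A * (t * t) + (2 * B) * t + C := by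
    intro t
    have h0 : 0 ≤ ∫ ζ, (t * f ζ + g ζ) ^ 2 ∂μ :=
      integral_nonneg fun ζ => sq_nonneg _
    have hrw : (fun ζ => (t * f ζ + g ζ) ^ 2)
        = fun ζ => (t * t) * (f ζ * f ζ) + ((2 * t) * (f ζ * g ζ) + g ζ * g ζ) := by
      funext ζ; ring
    have i2 : Integrable (fun ζ => (2 * t) * (f ζ * g ζ) + g ζ * g ζ) μ :=
      (hfg.const_mul _).add hgg
    rw [hrw, integral_add (hff.const_mul _) i2,
      integral_add (hfg.const_mul _) hgg, integral_const_mul, integral_const_mul] at h0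
    nlinarith [h0]
  have hdisc := discrim_le_zero hquad
  rw [discrim] at hdisc
  nlinarith [hdisc]

end EllipticKAux

open EllipticKAux in
/-- For every `m < 1`, the interpolation inequality `K(m) · K''(m) ≥ 3 (K'(m))²` holds. -/
theorem ellipticK_interpolation_inequality (m : ℝ) (hm : m < 1) :
    ellipticK m * deriv (deriv ellipticK) m ≥ 3 * (deriv ellipticK m) ^ 2 := by
  have hK1 : ∀ x : ℝ, x < 1 → HasDerivAt (IK (1/2) 0) ((1/2) * IK (3/2) 2 x) x := by
    intro x hx
    have h := hasDerivAt_IK (by norm_num : (0:ℝ) ≤ 1/2) 0 hx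
    have e : (1/2 : ℝ) * IK (1/2 + 1) (0 + 2) x = (1/2) * IK (3/2) 2 x := by norm_num
    rw [e] at h; exact h
  have hK2 : HasDerivAt (IK (3/2) 2) ((3/2) * IK (5/2) 4 m) m := by
    have h := hasDerivAt_IK (by norm_num : (0:ℝ) ≤ 3/2) 2 hm
    have e : (3/2 : ℝ) * IK (3/2 + 1) (2 + 2) m = (3/2) * IK (5/2) 4 m := by norm_num
    rw [e] at h; exact h
  have hev : ellipticK =ᶠ[nhds m] IK (1/2) 0 :=
    eventually_of_mem (Iio_mem_nhds hm) fun x hx => ellipticK_eq hx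
  have hd1 : deriv ellipticK m = (1/2) * IK (3/2) 2 m :=
    hev.deriv_eq.trans (hK1 m hm).deriv
  have hev2 : deriv ellipticK =ᶠ[nhds m] fun x => (1/2) * IK (3/2) 2 x := by
    filter_upwards [Iio_mem_nhds hm] with x hx
    have hevx : ellipticK =ᶠ[nhds x] IK (1/2) 0 :=
      eventually_of_mem (Iio_mem_nhds hx) fun y hy => ellipticK_eq hy
    exact hevx.deriv_eq.trans (hK1 x hx).deriv
  have hd2 : deriv (deriv ellipticK) m = (1/2) * ((3/2) * IK (5/2) 4 m) := by
    rw [hev2.deriv_eq]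
    exact (hK2.const_mul (1/2)).deriv
  have hcs := cauchy_schwarz hm
  have hA : 0 ≤ IK (1/2) 0 m :=
    integral_nonneg_of_ae ((ae_restrict_mem measurableSet_Ioc).mono fun ζ hζ => Fp_nonneg hζ hm)
  have hC : 0 ≤ IK (5/2) 4 m :=
    integral_nonneg_of_ae ((ae_restrict_mem measurableSet_Ioc).mono fun ζ hζ => Fp_nonneg hζ hm)
  rw [ellipticK_eq hm, hd1, hd2]
  nlinarith [hcs]
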